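/- Let K ∈ ℝ^{4×4} be the matrix with block form [[0, I₂],[I₂, 0]]. For y, z₁, z₂ ∈ ℝ let X_e(y,z₁,z₂) be the 5×5 matrix y(E_{1,4} − E_{2,3} + E_{3,5}) + z₁E_{1,5} + z₂E_{2,5}. Then M = {X_e(y,z₁,z₂) : y, z₁, z₂ ∈ ℝ} is a maximal abelian subalgebra of the Lie algebra e(K). -/

import Mathlib

open Matrix

/-- `o(K)`: real matrices `X` with `XK + KXᵀ = 0`. -/
def oK {n : ℕ} (K : Matrix (Fin n) (Fin n) ℝ) : Set (Matrix (Fin n) (Fin n) ℝ) :=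
  {X | X * K + K * Xᵀ = 0}

/-- The `(n+1) × (n+1)` matrix `E(X, a)` with block form `[[X, a], [0, 0]]`. -/
def Emat {n : ℕ} (X : Matrix (Fin n) (Fin n) ℝ) (a : Fin n → ℝ) :
    Matrix (Fin (n + 1)) (Fin (n + 1)) ℝ :=
  Matrix.of fun i j =>
    if hi : i.val < n then
      if hj : j.val < n then X ⟨i.val, hi⟩ ⟨j.val, hj⟩ else a ⟨i.val, hi⟩
    else 0

/-- The Lie algebra `e(K)`, as a set of `(n+1) × (n+1)` matrices. -/
def eK {n : ℕ} (K : Matrix (Fin n) (Fin n) ℝ) :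
    Set (Matrix (Fin (n + 1)) (Fin (n + 1)) ℝ) :=
  {m | ∃ X ∈ oK K, ∃ a : Fin n → ℝ, m = Emat X a}

/-- `M` is a maximal abelian subalgebra of the matrix Lie algebra (set) `L`:
it is a linear subspace contained in `L`, its elements pairwise commute, and
every element of `L` commuting with all of `M` belongs to `M`. -/
def IsMASA {κ : Type*} [Fintype κ] (L M : Set (Matrix κ κ ℝ)) : Prop :=
  M ⊆ L ∧
  (∀ X ∈ M, ∀ Y ∈ M, X * Y = Y * X) ∧
  (0 : Matrix κ κ ℝ) ∈ M ∧
  (∀ X ∈ M, ∀ Y ∈ M, X + Y ∈ M) ∧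
  (∀ (c : ℝ), ∀ X ∈ M, c • X ∈ M) ∧
  (∀ Y ∈ L, (∀ X ∈ M, Y * X = X * Y) → Y ∈ M)

lemma Emat_eq (X : Matrix (Fin 4) (Fin 4) ℝ) (a : Fin 4 → ℝ) :
    Emat X a = !![X 0 0, X 0 1, X 0 2, X 0 3, a 0;
                  X 1 0, X 1 1, X 1 2, X 1 3, a 1;
                  X 2 0, X 2 1, X 2 2, X 2 3, a 2;
                  X 3 0, X 3 1, X 3 2, X 3 3, a 3;
                  0, 0, 0, 0, 0] := by
  ext i j
  fin_cases i <;> fin_cases j <;> rfl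

set_option maxHeartbeats 1000000 in
/-- `M = {X_e(y,z₁,z₂)}` with `X_e(y,z₁,z₂) = y(E₁₄ - E₂₃ + E₃₅) + z₁E₁₅ + z₂E₂₅`
is a maximal abelian subalgebra of `e(K)`, `K = [[0, I₂],[I₂, 0]]`. -/
theorem stmt5 :
    IsMASA (eK (!![0, 0, 1, 0; 0, 0, 0, 1; 1, 0, 0, 0; 0, 1, 0, 0] :
        Matrix (Fin 4) (Fin 4) ℝ))
      {m | ∃ y z₁ z₂ : ℝ,
        m = !![0, 0, 0, y, z₁;
               0, 0, -y, 0, z₂;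
               0, 0, 0, 0, y;
               0, 0, 0, 0, 0;
               0, 0, 0, 0, 0]} := by
  refine ⟨?_, ?_, ?_, ?_, ?_, ?_⟩
  · -- M ⊆ eK
    rintro m ⟨y, z₁, z₂, rfl⟩
    refine ⟨!![0,0,0,y; 0,0,-y,0; 0,0,0,0; 0,0,0,0], ?_, ![z₁, z₂, y, 0], ?_⟩
    · show _ * _ + _ * _ = 0
      ext i j
      fin_cases i <;> fin_cases j <;>
        simp [Matrix.mul_apply, Fin.sum_univ_four, Matrix.vecHead, Matrix.vecTail,
          Matrix.vecMul, dotProduct]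
    · rw [Emat_eq]
      ext i j
      fin_cases i <;> fin_cases j <;> rfl
  · -- abelian
    rintro A ⟨y, z₁, z₂, rfl⟩ B ⟨y', z₁', z₂', rfl⟩
    ext i j
    fin_cases i <;> fin_cases j <;>
      simp [Matrix.mul_apply, Fin.sum_univ_five, Matrix.vecHead, Matrix.vecTail] <;> ring
  · -- zero
    exact ⟨0, 0, 0, by ext i j; fin_cases i <;> fin_cases j <;> norm_num⟩
  · -- add
    rintro A ⟨y, z₁, z₂, rfl⟩ B ⟨y', z₁', z₂', rfl⟩
    refine ⟨y + y', z₁ + z₁', z₂ + z₂', ?_⟩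
    ext i j
    fin_cases i <;> fin_cases j <;>
      simp [Matrix.add_apply, Matrix.vecHead, Matrix.vecTail] <;> ring
  · -- smul
    rintro c A ⟨y, z₁, z₂, rfl⟩
    refine ⟨c * y, c * z₁, c * z₂, ?_⟩
    ext i j
    fin_cases i <;> fin_cases j <;>
      simp [Matrix.smul_apply, Matrix.vecHead, Matrix.vecTail] <;> ring
  · -- maximality
    rintro Y ⟨X, hX, a, rfl⟩ hcomm
    have h1 := hcomm !![0,0,0,0,1; 0,0,0,0,0; 0,0,0,0,0; 0,0,0,0,0; 0,0,0,0,0]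
      ⟨0, 1, 0, by ext i j; fin_cases i <;> fin_cases j <;> norm_num⟩
    have h2 := hcomm !![0,0,0,0,0; 0,0,0,0,1; 0,0,0,0,0; 0,0,0,0,0; 0,0,0,0,0]
      ⟨0, 0, 1, by ext i j; fin_cases i <;> fin_cases j <;> norm_num⟩
    have h3 := hcomm !![0,0,0,1,0; 0,0,-1,0,0; 0,0,0,0,1; 0,0,0,0,0; 0,0,0,0,0]
      ⟨1, 0, 0, by ext i j; fin_cases i <;> fin_cases j <;> norm_num⟩
    rw [Emat_eq] at h1 h2 h3
    have hX' : X * !![0, 0, 1, 0; 0, 0, 0, 1; 1, 0, 0, 0; 0, 1, 0, 0] +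
        !![0, 0, 1, 0; 0, 0, 0, 1; 1, 0, 0, 0; 0, 1, 0, 0] * Xᵀ = 0 := hX
    have o := fun i j => congrFun (congrFun hX' i) j
    have c1 := fun i j => congrFun (congrFun h1 i) j
    have c2 := fun i j => congrFun (congrFun h2 i) j
    have c3 := fun i j => congrFun (congrFun h3 i) j
    have e00 : X 0 0 = 0 := by
      have := c1 0 4
      simp [Matrix.mul_apply, Fin.sum_univ_five, Matrix.vecHead, Matrix.vecTail] at this
      linarith
    have e10 : X 1 0 = 0 := by
      have := c1 1 4
      simp [Matrix.mul_apply, Fin.sum_univ_five, Matrix.vecHead, Matrix.vecTail] at this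
      linarith
    have e20 : X 2 0 = 0 := by
      have := c1 2 4
      simp [Matrix.mul_apply, Fin.sum_univ_five, Matrix.vecHead, Matrix.vecTail] at this
      linarith
    have e30 : X 3 0 = 0 := by
      have := c1 3 4
      simp [Matrix.mul_apply, Fin.sum_univ_five, Matrix.vecHead, Matrix.vecTail] at this
      linarith
    have e01 : X 0 1 = 0 := by
      have := c2 0 4
      simp [Matrix.mul_apply, Fin.sum_univ_five, Matrix.vecHead, Matrix.vecTail] at this
      linarith
    have e11 : X 1 1 = 0 := by
      have := c2 1 4
      simp [Matrix.mul_apply, Fin.sum_univ_five, Matrix.vecHead, Matrix.vecTail] at this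
      linarith
    have e21 : X 2 1 = 0 := by
      have := c2 2 4
      simp [Matrix.mul_apply, Fin.sum_univ_five, Matrix.vecHead, Matrix.vecTail] at this
      linarith
    have e31 : X 3 1 = 0 := by
      have := c2 3 4
      simp [Matrix.mul_apply, Fin.sum_univ_five, Matrix.vecHead, Matrix.vecTail] at this
      linarith
    have e02 : X 0 2 = 0 := by
      have := o 0 0
      simp [Matrix.mul_apply, Fin.sum_univ_four, Matrix.vecHead, Matrix.vecTail,
        Matrix.vecMul, dotProduct, Matrix.transpose_apply] at this
      linarith
    have e13 : X 1 3 = 0 := by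
      have := o 1 1
      simp [Matrix.mul_apply, Fin.sum_univ_four, Matrix.vecHead, Matrix.vecTail,
        Matrix.vecMul, dotProduct, Matrix.transpose_apply] at this
      linarith
    have e22 : X 2 2 = 0 := by
      have := o 0 2
      simp [Matrix.mul_apply, Fin.sum_univ_four, Matrix.vecHead, Matrix.vecTail,
        Matrix.vecMul, dotProduct, Matrix.transpose_apply] at this
      linarith
    have e32 : X 3 2 = 0 := by
      have := o 0 3
      simp [Matrix.mul_apply, Fin.sum_univ_four, Matrix.vecHead, Matrix.vecTail,
        Matrix.vecMul, dotProduct, Matrix.transpose_apply] at this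
      linarith
    have e23 : X 2 3 = 0 := by
      have := o 1 2
      simp [Matrix.mul_apply, Fin.sum_univ_four, Matrix.vecHead, Matrix.vecTail,
        Matrix.vecMul, dotProduct, Matrix.transpose_apply] at this
      linarith
    have e33 : X 3 3 = 0 := by
      have := o 1 3
      simp [Matrix.mul_apply, Fin.sum_univ_four, Matrix.vecHead, Matrix.vecTail,
        Matrix.vecMul, dotProduct, Matrix.transpose_apply] at this
      linarith
    have eskew : X 0 3 + X 1 2 = 0 := by
      have := o 0 1
      simp [Matrix.mul_apply, Fin.sum_univ_four, Matrix.vecHead, Matrix.vecTail,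
        Matrix.vecMul, dotProduct, Matrix.transpose_apply] at this
      linarith
    have ea3 : a 3 = 0 := by
      have := c3 0 4
      simp [Matrix.mul_apply, Fin.sum_univ_five, Matrix.vecHead, Matrix.vecTail] at this
      linarith
    have ea2 : X 1 2 = -a 2 := by
      have := c3 1 4
      simp [Matrix.mul_apply, Fin.sum_univ_five, Matrix.vecHead, Matrix.vecTail] at this
      linarith
    refine ⟨a 2, a 0, a 1, ?_⟩
    rw [Emat_eq]
    ext i j
    fin_cases i <;> fin_cases j <;>
      simp [Matrix.vecHead, Matrix.vecTail] <;>
      linarith [e00, e10, e20, e30, e01, e11, e21, e31, e02, e13, e22, e32, e23, e33, eskew, ea3, ea2]
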